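/- Let H ⊂ ℂ² be a C² real hypersurface such that at each point z ∈ H, the unique complex line T_z^{1,0}H contained in T_zH has finite slope λ(z) ∈ ℂ (not vertical), and assume z ↦ λ(z) is C¹. Then the graph p*H = {(z, λ(z)) : z ∈ H} ⊂ ℂ³ is a 3-dimensional C¹ submanifold that is semi-legendrian: at every point w ∈ p*H, the intersection of the tangent space T_w(p*H) with the contact plane 𝒫_w = ker(dy − λ dx) has real dimension at least 2. -/

import Mathlib

/-- The contact plane `𝒫 = ker(dy − λ dx)` at a point of ℂ³ with λ-coordinate `l`:
the set of vectors `(u, v, μ)` with `v = l·u`. -/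
noncomputable def contactPlane (l : ℂ) : Submodule ℝ (ℂ × ℂ × ℂ) where
  carrier := {w | w.2.1 = l * w.1}
  add_mem' := by
    intro a b ha hb
    simp only [Set.mem_setOf_eq, Prod.fst_add, Prod.snd_add] at *
    rw [ha, hb]; ring
  zero_mem' := by simp
  smul_mem' := by
    intro r w hw
    simp only [Set.mem_setOf_eq, Prod.smul_fst, Prod.smul_snd, Complex.real_smul] at *
    rw [hw]; ring

/-- The tangent space at `(z, lam z)` of the graph `{(z, lam z) : z ∈ H}`:
the image of `T_zH = ker dρ_z` under `v ↦ (v, dlam_z v)`. -/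
noncomputable def graphTangent (ρ : ℂ × ℂ → ℝ) (lam : ℂ × ℂ → ℂ) (z : ℂ × ℂ) :
    Submodule ℝ (ℂ × ℂ × ℂ) :=
  Submodule.map
    ((LinearMap.fst ℝ ℂ ℂ).prod
      ((LinearMap.snd ℝ ℂ ℂ).prod (fderiv ℝ lam z : (ℂ × ℂ) →ₗ[ℝ] ℂ)))
    (LinearMap.ker (fderiv ℝ ρ z : (ℂ × ℂ) →ₗ[ℝ] ℝ))

/-- let `H = {ρ = 0}` be a C² real hypersurface of ℂ² whose complex
tangent `T^{1,0}H = {(u, lam(z)·u)}` has finite slope `lam(z)` depending C¹ on `z`.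
Then the graph `p*H = {(z, lam z) : z ∈ H}` is semi-legendrian: at each of its points
the tangent space meets the contact plane `ker(dy − λ dx)` in dimension ≥ 2. -/
theorem stmt_10 (ρ : ℂ × ℂ → ℝ) (lam : ℂ × ℂ → ℂ)
    (hρ : ContDiff ℝ 2 ρ) (hlam : ContDiff ℝ 1 lam)
    (hreg : ∀ z, ρ z = 0 → fderiv ℝ ρ z ≠ 0)
    (hslope : ∀ z, ρ z = 0 → ∀ u : ℂ, fderiv ℝ ρ z (u, lam z * u) = 0) :
    ∀ z, ρ z = 0 →
      2 ≤ Module.finrank ℝ ↥(graphTangent ρ lam z ⊓ contactPlane (lam z)) := by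
  intro z hz
  set G : (ℂ × ℂ) →ₗ[ℝ] ℂ × ℂ × ℂ :=
    (LinearMap.fst ℝ ℂ ℂ).prod
      ((LinearMap.snd ℝ ℂ ℂ).prod (fderiv ℝ lam z : (ℂ × ℂ) →ₗ[ℝ] ℂ)) with hG
  set f : ℂ →ₗ[ℝ] ℂ × ℂ :=
    (LinearMap.id : ℂ →ₗ[ℝ] ℂ).prod
      ((LinearMap.mulLeft ℝ (lam z)).restrictScalars ℝ) with hf
  set L : ℂ →ₗ[ℝ] ℂ × ℂ × ℂ := G.comp f with hL
  have hLval : ∀ u : ℂ, L u = (u, lam z * u, fderiv ℝ lam z (u, lam z * u)) := by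
    intro u; rfl
  have hrange : LinearMap.range L ≤ graphTangent ρ lam z ⊓ contactPlane (lam z) := by
    rintro w ⟨u, rfl⟩
    constructor
    · refine ⟨(u, lam z * u), ?_, rfl⟩
      exact hslope z hz u
    · show (L u).2.1 = lam z * (L u).1
      rw [hLval]
  have hinj : Function.Injective L := by
    intro a b hab
    have : (L a).1 = (L b).1 := by rw [hab]
    simpa [hLval] using this
  have h1 : Module.finrank ℝ (LinearMap.range L) = 2 := by
    rw [LinearMap.finrank_range_of_inj hinj, Complex.finrank_real_complex]
  calc 2 = Module.finrank ℝ (LinearMap.range L) := h1.symm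
    _ ≤ Module.finrank ℝ ↥(graphTangent ρ lam z ⊓ contactPlane (lam z)) :=
        Submodule.finrank_mono hrange
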